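/- Let (V, a) be an inner product space, X ∈ V with a(X,X) < 1, and F(y) = √(a(y,y)) + a(X,y) the Randers norm with Cartan tensor C_y. Then for y ≠ 0 and u, v, z ∈ V: 2C_y(z,u,v) = [a(z,u)a(X,v)a(y,y) − a(y,v)a(z,u)a(X,y) + a(X,u)a(z,v)a(y,y) − a(y,v)a(X,u)a(z,y) + a(X,z)a(u,v)a(y,y) − a(y,u)a(X,z)a(v,y) − a(X,y)a(u,y)a(z,v) − a(X,y)a(u,v)a(z,y) − a(X,v)a(u,y)a(z,y)]/(a(y,y)^{3/2}) + 3a(y,v)a(X,y)a(u,y)a(z,y)/(a(y,y)^{5/2}). -/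

import Mathlib

open scoped RealInnerProductSpace
open Topology Filter

/-- The fundamental tensor of a Minkowski norm:
`g_y(u,v) = (1/2) d^2/ds dt [F^2(y+su+tv)]` at `s=t=0`. -/
noncomputable def fund {V : Type*} [AddCommGroup V] [Module ℝ V]
    (F : V → ℝ) (y u v : V) : ℝ :=
  (1/2) * deriv (fun s : ℝ => deriv (fun t : ℝ => (F (y + s • u + t • v))^2) 0) 0

/-- The Cartan tensor: `C_y(u,v,w) = (1/2) d/dt [g_{y+tw}(u,v)]` at `t=0`. -/
noncomputable def cartan {V : Type*} [AddCommGroup V] [Module ℝ V]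
    (F : V → ℝ) (y u v w : V) : ℝ :=
  (1/2) * deriv (fun t : ℝ => fund F (y + t • w) u v) 0

section Helpers

variable {V : Type*} [NormedAddCommGroup V] [InnerProductSpace ℝ V]

lemma hdA (c y w : V) (t : ℝ) :
    HasDerivAt (fun t : ℝ => (⟪c, y + t • w⟫ : ℝ)) ⟪c, w⟫ t := by
  have h : (fun t : ℝ => (⟪c, y + t • w⟫ : ℝ)) = fun t : ℝ => ⟪c, y⟫ + t * ⟪c, w⟫ := by
    funext t; rw [inner_add_right, real_inner_smul_right]
  rw [h]
  simpa using ((hasDerivAt_id t).mul_const (⟪c, w⟫ : ℝ)).const_add (⟪c, y⟫ : ℝ)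

lemma hdA' (c y w : V) (t : ℝ) :
    HasDerivAt (fun t : ℝ => (⟪y + t • w, c⟫ : ℝ)) ⟪w, c⟫ t := by
  have h : (fun t : ℝ => (⟪y + t • w, c⟫ : ℝ)) = fun t : ℝ => ⟪y, c⟫ + t * ⟪w, c⟫ := by
    funext t; rw [inner_add_left, real_inner_smul_left]
  rw [h]
  simpa using ((hasDerivAt_id t).mul_const (⟪w, c⟫ : ℝ)).const_add (⟪y, c⟫ : ℝ)

lemma hdQ (y w : V) (t : ℝ) :
    HasDerivAt (fun t : ℝ => (⟪y + t • w, y + t • w⟫ : ℝ)) (2 * ⟪y + t • w, w⟫) t := by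
  have h : (fun t : ℝ => (⟪y + t • w, y + t • w⟫ : ℝ))
      = fun t : ℝ => ⟪y, y⟫ + t * (2 * ⟪y, w⟫) + t ^ 2 * ⟪w, w⟫ := by
    funext t
    rw [real_inner_add_add_self, real_inner_smul_right, real_inner_smul_left,
      real_inner_smul_right]
    ring
  rw [h]
  have h1 := (((hasDerivAt_id t).mul_const (2 * ⟪y, w⟫ : ℝ)).const_add (⟪y, y⟫ : ℝ)).add
    ((hasDerivAt_pow 2 t).mul_const (⟪w, w⟫ : ℝ))
  refine h1.congr_deriv ?_
  rw [inner_add_left, real_inner_smul_left]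
  ring

lemma hdSqrt (y w : V) (hy : y ≠ 0) :
    HasDerivAt (fun t : ℝ => Real.sqrt ⟪y + t • w, y + t • w⟫)
      (⟪y, w⟫ / Real.sqrt ⟪y, y⟫) 0 := by
  have hq : (⟪y, y⟫ : ℝ) ≠ 0 := inner_self_ne_zero.mpr hy
  have hq0 : (0:ℝ) < ⟪y, y⟫ := lt_of_le_of_ne real_inner_self_nonneg (Ne.symm hq)
  have hs : Real.sqrt ⟪y, y⟫ ≠ 0 := ne_of_gt (Real.sqrt_pos.mpr hq0)
  have h1 : HasDerivAt (fun t : ℝ => (⟪y + t • w, y + t • w⟫ : ℝ)) (2 * ⟪y, w⟫) 0 := by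
    simpa using hdQ y w 0
  have h2 : HasDerivAt Real.sqrt (1 / (2 * Real.sqrt ⟪y, y⟫))
      ((fun t : ℝ => (⟪y + t • w, y + t • w⟫ : ℝ)) 0) := by
    simpa using Real.hasDerivAt_sqrt hq
  have h3 := h2.comp 0 h1
  have hval : 1 / (2 * Real.sqrt ⟪y, y⟫) * (2 * ⟪y, w⟫) = ⟪y, w⟫ / Real.sqrt ⟪y, y⟫ := by
    field_simp
  rw [← hval]
  exact h3

lemma hdFsq (X : V) (F : V → ℝ) (hF : ∀ w : V, F w = Real.sqrt ⟪w, w⟫ + ⟪X, w⟫)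
    (p v : V) (hp : p ≠ 0) :
    HasDerivAt (fun t : ℝ => (F (p + t • v)) ^ 2)
      (2 * (Real.sqrt ⟪p, p⟫ + ⟪X, p⟫) * (⟪p, v⟫ / Real.sqrt ⟪p, p⟫ + ⟪X, v⟫)) 0 := by
  have hfun : (fun t : ℝ => F (p + t • v))
      = fun t : ℝ => Real.sqrt ⟪p + t • v, p + t • v⟫ + ⟪X, p + t • v⟫ :=
    funext fun t => hF _
  have hdF : HasDerivAt (fun t : ℝ => F (p + t • v)) (⟪p, v⟫ / Real.sqrt ⟪p, p⟫ + ⟪X, v⟫) 0 := by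
    rw [hfun]; exact (hdSqrt p v hp).add (hdA X p v 0)
  have h2 := hdF.pow 2
  have hval : F (p + (0:ℝ) • v) = Real.sqrt ⟪p, p⟫ + ⟪X, p⟫ := by simp [hF]
  refine h2.congr_deriv ?_
  rw [hval]
  norm_num

lemma fund_eq (X : V) (F : V → ℝ) (hF : ∀ w : V, F w = Real.sqrt ⟪w, w⟫ + ⟪X, w⟫)
    (y : V) (hy : y ≠ 0) (u v : V) :
    fund F y u v =
      (⟪y, u⟫ / Real.sqrt ⟪y, y⟫ + ⟪X, u⟫) * (⟪y, v⟫ / Real.sqrt ⟪y, y⟫ + ⟪X, v⟫)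
      + (Real.sqrt ⟪y, y⟫ + ⟪X, y⟫) *
        (⟪u, v⟫ / Real.sqrt ⟪y, y⟫ - ⟪y, v⟫ * ⟪y, u⟫ / (⟪y, y⟫ * Real.sqrt ⟪y, y⟫)) := by
  have hq : (⟪y, y⟫ : ℝ) ≠ 0 := inner_self_ne_zero.mpr hy
  have hq0 : (0:ℝ) < ⟪y, y⟫ := lt_of_le_of_ne real_inner_self_nonneg (Ne.symm hq)
  have hs : Real.sqrt ⟪y, y⟫ ≠ 0 := ne_of_gt (Real.sqrt_pos.mpr hq0)
  have hcont : Continuous fun s : ℝ => y + s • u := by continuity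
  have hev : ∀ᶠ s in 𝓝 (0:ℝ), y + s • u ≠ 0 :=
    hcont.continuousAt.eventually_ne (by simpa using hy)
  have hcong : (fun s : ℝ => deriv (fun t : ℝ => (F (y + s • u + t • v))^2) 0)
      =ᶠ[𝓝 (0:ℝ)] fun s : ℝ =>
        2 * ((Real.sqrt ⟪y + s • u, y + s • u⟫ + ⟪X, y + s • u⟫) *
          (⟪y + s • u, v⟫ / Real.sqrt ⟪y + s • u, y + s • u⟫ + ⟪X, v⟫)) := by
    refine hev.mono fun s hs => ?_
    have h := (hdFsq X F hF (y + s • u) v hs).deriv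
    dsimp only
    rw [h]; ring
  unfold fund
  rw [hcong.deriv_eq]
  have hS := hdSqrt y u hy
  have hB := hdA X y u 0
  have hA := hdA' v y u 0
  have hSne : Real.sqrt ⟪y + (0:ℝ) • u, y + (0:ℝ) • u⟫ ≠ 0 := by simpa using hs
  have hdiv := hA.div hS hSne
  have htot := ((hS.add hB).mul (hdiv.add_const (⟪X, v⟫ : ℝ))).const_mul (2:ℝ)
  simp only [Pi.add_def, Pi.mul_def, Pi.div_def, Pi.sub_def] at htot
  rw [htot.deriv]
  simp only [zero_smul, add_zero]
  set r := Real.sqrt ⟪y, y⟫ with hrdef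
  have hrq : (⟪y, y⟫ : ℝ) = r * r := (Real.mul_self_sqrt hq0.le).symm
  rw [hrq]
  field_simp

end Helpers

/-- explicit formula for the Cartan tensor of a Randers norm. -/
theorem randers_cartan_formula
    {V : Type*} [NormedAddCommGroup V] [InnerProductSpace ℝ V] [FiniteDimensional ℝ V]
    (X : V) (hX : ⟪X, X⟫ < 1)
    (F : V → ℝ) (hF : ∀ w : V, F w = Real.sqrt ⟪w, w⟫ + ⟪X, w⟫) :
    ∀ y : V, y ≠ 0 → ∀ u v z : V,
      2 * cartan F y z u v =
        (⟪z, u⟫ * ⟪X, v⟫ * ⟪y, y⟫ - ⟪y, v⟫ * ⟪z, u⟫ * ⟪X, y⟫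
          + ⟪X, u⟫ * ⟪z, v⟫ * ⟪y, y⟫ - ⟪y, v⟫ * ⟪X, u⟫ * ⟪z, y⟫
          + ⟪X, z⟫ * ⟪u, v⟫ * ⟪y, y⟫ - ⟪y, u⟫ * ⟪X, z⟫ * ⟪v, y⟫
          - ⟪X, y⟫ * ⟪u, y⟫ * ⟪z, v⟫ - ⟪X, y⟫ * ⟪u, v⟫ * ⟪z, y⟫
          - ⟪X, v⟫ * ⟪u, y⟫ * ⟪z, y⟫) / (⟪y, y⟫ * Real.sqrt ⟪y, y⟫)
        + 3 * ⟪y, v⟫ * ⟪X, y⟫ * ⟪u, y⟫ * ⟪z, y⟫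
            / (⟪y, y⟫^2 * Real.sqrt ⟪y, y⟫) := by
  intro y hy u v z
  unfold cartan
  have hq : (⟪y, y⟫ : ℝ) ≠ 0 := inner_self_ne_zero.mpr hy
  have hq0 : (0:ℝ) < ⟪y, y⟫ := lt_of_le_of_ne real_inner_self_nonneg (Ne.symm hq)
  have hs : Real.sqrt ⟪y, y⟫ ≠ 0 := ne_of_gt (Real.sqrt_pos.mpr hq0)
  have hcont : Continuous fun t : ℝ => y + t • v := by continuity
  have hev : ∀ᶠ t in 𝓝 (0:ℝ), y + t • v ≠ 0 :=
    hcont.continuousAt.eventually_ne (by simpa using hy)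
  have hcong : (fun t : ℝ => fund F (y + t • v) z u) =ᶠ[𝓝 (0:ℝ)] fun t : ℝ =>
      (⟪y + t • v, z⟫ / Real.sqrt ⟪y + t • v, y + t • v⟫ + ⟪X, z⟫) *
        (⟪y + t • v, u⟫ / Real.sqrt ⟪y + t • v, y + t • v⟫ + ⟪X, u⟫)
      + (Real.sqrt ⟪y + t • v, y + t • v⟫ + ⟪X, y + t • v⟫) *
        (⟪z, u⟫ / Real.sqrt ⟪y + t • v, y + t • v⟫
          - ⟪y + t • v, u⟫ * ⟪y + t • v, z⟫ /
            (⟪y + t • v, y + t • v⟫ * Real.sqrt ⟪y + t • v, y + t • v⟫)) := by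
    refine hev.mono fun t ht => ?_
    exact fund_eq X F hF _ ht z u
  have hS := hdSqrt y v hy
  have hQ : HasDerivAt (fun t : ℝ => (⟪y + t • v, y + t • v⟫ : ℝ)) (2 * ⟪y, v⟫) 0 := by
    simpa using hdQ y v 0
  have hz := hdA' z y v 0
  have hu := hdA' u y v 0
  have hXp := hdA X y v 0
  have hSne : Real.sqrt ⟪y + (0:ℝ) • v, y + (0:ℝ) • v⟫ ≠ 0 := by simpa using hs
  have hQSne : (⟪y + (0:ℝ) • v, y + (0:ℝ) • v⟫ : ℝ) *
      Real.sqrt ⟪y + (0:ℝ) • v, y + (0:ℝ) • v⟫ ≠ 0 := by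
    simpa using mul_ne_zero hq hs
  have h1 := (hz.div hS hSne).add_const (⟪X, z⟫ : ℝ)
  have h2 := (hu.div hS hSne).add_const (⟪X, u⟫ : ℝ)
  have h3 := h1.mul h2
  have h4 := hS.add hXp
  have h5 := (hasDerivAt_const (0:ℝ) (⟪z, u⟫ : ℝ)).div hS hSne
  have h6 := (hu.mul hz).div (hQ.mul hS) hQSne
  have h7 := h5.sub h6
  have h8 := h4.mul h7
  have htot := h3.add h8
  simp only [Pi.add_def, Pi.mul_def, Pi.div_def, Pi.sub_def] at htot
  rw [hcong.deriv_eq, htot.deriv]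
  simp only [zero_smul, add_zero]
  set r := Real.sqrt ⟪y, y⟫ with hrdef
  have hrq : (⟪y, y⟫ : ℝ) = r * r := (Real.mul_self_sqrt hq0.le).symm
  rw [hrq]
  simp only [real_inner_comm z y, real_inner_comm u y, real_inner_comm v y,
    real_inner_comm z u, real_inner_comm z v, real_inner_comm v u]
  field_simp
  ring
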